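/- Let p : ℝ → ℝ³ be differentiable at t, let R : ℝ → M₃(ℝ) be differentiable at t with R(t) ∈ SO(3), and suppose the derivative satisfies R′(t) = R(t) [ω]× for some ω ∈ ℝ³ (body-frame angular velocity). Fix r, a ∈ ℝ³ and define the cable vector L⃗(s) := p(s) + R(s) r − a and the cable length L(s) := ‖L⃗(s)‖ (Euclidean norm). If L⃗(t) ≠ 0, then L is differentiable at t and L′(t) = ⟨L̂, p′(t)⟩ + ⟨(R(t) r) × L̂, R(t) ω⟩, where L̂ := L⃗(t)/L(t) is the unit cable vector and × is the cross product in ℝ³. -/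

import Mathlib

open Matrix

/-- The skew-symmetric cross-product matrix `[ω]×` of `ω ∈ ℝ³`, so that
`[ω]× v = ω × v` for all `v ∈ ℝ³`. -/
def skew (ω : Fin 3 → ℝ) : Matrix (Fin 3) (Fin 3) ℝ :=
  !![0, -ω 2, ω 1; ω 2, 0, -ω 0; -ω 1, ω 0, 0]

lemma skew_mulVec (ω v : Fin 3 → ℝ) : skew ω *ᵥ v = crossProduct ω v := by
  funext i
  fin_cases i <;>
    simp [skew, Matrix.mulVec, dotProduct, crossProduct, Fin.sum_univ_three] <;> ring

lemma triple (a b c : Fin 3 → ℝ) :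
    a ⬝ᵥ crossProduct b c = (Matrix.of ![a, b, c]).det := by
  simp [Matrix.det_fin_three, crossProduct, dotProduct, Fin.sum_univ_three]
  ring

lemma key (R : Matrix (Fin 3) (Fin 3) ℝ) (h1 : Rᵀ * R = 1) (h2 : R.det = 1)
    (v r ω : Fin 3 → ℝ) :
    v ⬝ᵥ ((R * skew ω) *ᵥ r) = (crossProduct (R *ᵥ r) v) ⬝ᵥ (R *ᵥ ω) := by
  have hRRT : R * Rᵀ = 1 := mul_eq_one_comm.mpr h1
  set w : Fin 3 → ℝ := Rᵀ *ᵥ v with hw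
  have hv : R *ᵥ w = v := by
    rw [hw, Matrix.mulVec_mulVec, hRRT, Matrix.one_mulVec]
  have hL : v ⬝ᵥ ((R * skew ω) *ᵥ r) = w ⬝ᵥ crossProduct ω r := by
    rw [← Matrix.mulVec_mulVec, Matrix.dotProduct_mulVec, skew_mulVec]
    congr 1
    rw [hw]
    funext i
    simp [Matrix.vecMul, Matrix.mulVec, dotProduct, Matrix.transpose_apply, mul_comm]
  have hM : Matrix.of ![R *ᵥ ω, R *ᵥ r, R *ᵥ w] = Matrix.of ![ω, r, w] * Rᵀ := by
    ext i j
    fin_cases i <;>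
      simp [Matrix.mul_apply, Matrix.mulVec, dotProduct, mul_comm]
  have hR : (crossProduct (R *ᵥ r) v) ⬝ᵥ (R *ᵥ ω)
      = (Matrix.of ![ω, r, w]).det := by
    rw [dotProduct_comm, ← hv, triple, hM, Matrix.det_mul, Matrix.det_transpose, h2,
      mul_one]
  rw [hL, hR, triple]
  simp [Matrix.det_fin_three]
  ring

/-- **cable-length velocity, equation (4) of the paper.**
If `p` is differentiable at `t` with derivative `p′(t)`, `R` is differentiable at `t` with
`R(t) ∈ SO(3)` and `R′(t) = R(t) [ω]×`, and the cable vector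
`L⃗(s) = p(s) + R(s) r − a` is nonzero at `t`, then the cable length `L(s) = ‖L⃗(s)‖`
is differentiable at `t` with
`L′(t) = ⟨L̂, p′(t)⟩ + ⟨(R(t) r) × L̂, R(t) ω⟩`, where `L̂ = L⃗(t)/L(t)`. -/
theorem cable_length_velocity
    (p : ℝ → Fin 3 → ℝ) (p' : Fin 3 → ℝ) (t : ℝ)
    (hp : HasDerivAt p p' t)
    (R : ℝ → Matrix (Fin 3) (Fin 3) ℝ) (ω : Fin 3 → ℝ)
    (hSO : (R t)ᵀ * R t = 1 ∧ (R t).det = 1)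
    (hR' : ∀ i k : Fin 3, HasDerivAt (fun s => R s i k) ((R t * skew ω) i k) t)
    (r a : Fin 3 → ℝ)
    (hne : p t + R t *ᵥ r - a ≠ 0) :
    let Lvec : ℝ → Fin 3 → ℝ := fun s => p s + R s *ᵥ r - a
    let Llen : ℝ → ℝ := fun s => Real.sqrt (∑ i, Lvec s i ^ 2)
    let Lhat : Fin 3 → ℝ := (Llen t)⁻¹ • Lvec t
    HasDerivAt Llen (Lhat ⬝ᵥ p' + (crossProduct (R t *ᵥ r) Lhat) ⬝ᵥ (R t *ᵥ ω)) t := by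
  intro Lvec Llen Lhat
  set v' : Fin 3 → ℝ := p' + (R t * skew ω) *ᵥ r with hv'
  -- componentwise derivative of Lvec
  have hcomp : ∀ i, HasDerivAt (fun s => Lvec s i) (v' i) t := by
    intro i
    have h1 : HasDerivAt (fun s => p s i) (p' i) t := hasDerivAt_pi.mp hp i
    have h2 : HasDerivAt (fun s => (R s *ᵥ r) i) (((R t * skew ω) *ᵥ r) i) t := by
      have hfun : ∀ s, (R s *ᵥ r) i = ∑ k, R s i k * r k := by
        intro s; simp [Matrix.mulVec, dotProduct]
      simp only [hfun]
      exact HasDerivAt.fun_sum (fun k _ => (hR' i k).mul_const (r k))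
    simpa [Lvec, hv'] using (h1.add h2).sub_const (a i)
  -- derivative of the sum of squares
  have hf : HasDerivAt (fun s => ∑ i, Lvec s i ^ 2)
      (∑ i, 2 * Lvec t i * v' i) t := by
    apply HasDerivAt.fun_sum
    intro i _
    have h := (hcomp i).fun_mul (hcomp i)
    simp only [sq]
    convert h using 1
    · rfl
    ring
  -- positivity
  have hpos : 0 < ∑ i, Lvec t i ^ 2 := by
    have : Lvec t ≠ 0 := hne
    rcases Function.ne_iff.mp this with ⟨i, hi⟩
    have h1 : 0 < Lvec t i ^ 2 :=
      lt_of_le_of_ne (sq_nonneg _) (Ne.symm (pow_ne_zero 2 hi))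
    exact lt_of_lt_of_le h1
      (Finset.single_le_sum (f := fun j => Lvec t j ^ 2) (fun j _ => sq_nonneg _)
        (Finset.mem_univ i))
  have hLpos : 0 < Llen t := Real.sqrt_pos.mpr hpos
  have hsqrt : HasDerivAt Llen
      ((1 / (2 * Real.sqrt (∑ i, Lvec t i ^ 2))) * ∑ i, 2 * Lvec t i * v' i) t :=
    (Real.hasDerivAt_sqrt (ne_of_gt hpos)).comp t hf
  convert hsqrt using 1
  have hkey := key (R t) hSO.1 hSO.2 Lhat r ω
  have hLhat : (crossProduct (R t *ᵥ r) Lhat) ⬝ᵥ (R t *ᵥ ω)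
      = Lhat ⬝ᵥ ((R t * skew ω) *ᵥ r) := hkey.symm
  rw [hLhat]
  have : Lhat ⬝ᵥ p' + Lhat ⬝ᵥ ((R t * skew ω) *ᵥ r) = Lhat ⬝ᵥ v' := by
    rw [hv', dotProduct_add]
  rw [this]
  have hL : Llen t = Real.sqrt (∑ i, Lvec t i ^ 2) := rfl
  simp only [Lhat, dotProduct, Pi.smul_apply, smul_eq_mul, hL]
  rw [Finset.mul_sum]
  apply Finset.sum_congr rfl
  intro i _
  field_simp
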